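/- Let V be a unital Jordan algebra over ℝ, let a ≠ 0 be an idempotent, and let u ∈ V satisfy u ≠ 0, u³ = u, a·u = ½u and a·u² = a; set c := u² − a. Then a, u, c are linearly independent over ℝ, and there exists a unique injective ℝ-linear map φ from the span of {a, u, c} into the 2×2 real matrices such that φ(x·y) = ½(φ(x)φ(y) + φ(y)φ(x)) for all x, y in the span, and φ(a) = [[1,0],[0,0]], φ(u) = [[0,1],[1,0]], φ(c) = [[0,0],[0,1]]; its image is the space of symmetric 2×2 real matrices. -/

import Mathlib

/-- The representation property of a linear map `φ : V → M₂(ℝ)` on the span of `{a, u, c}`: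
`φ` is injective on the span, satisfies `φ(x·y) = ½(φ(x)φ(y) + φ(y)φ(x))` for `x, y` in the
span, sends `a`, `u`, `c` to the prescribed symmetric matrices, and maps the span onto the
space of symmetric `2×2` real matrices. -/
def IsSymRep {V : Type*} [NonAssocRing V] [Module ℝ V]
    (a u c : V) (φ : V →ₗ[ℝ] Matrix (Fin 2) (Fin 2) ℝ) : Prop :=
  Set.InjOn φ (Submodule.span ℝ ({a, u, c} : Set V)) ∧
  (∀ x ∈ Submodule.span ℝ ({a, u, c} : Set V),
    ∀ y ∈ Submodule.span ℝ ({a, u, c} : Set V),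
      φ (x * y) = (1 / 2 : ℝ) • (φ x * φ y + φ y * φ x)) ∧
  φ a = !![1, 0; 0, 0] ∧ φ u = !![0, 1; 1, 0] ∧ φ c = !![0, 0; 0, 1] ∧
  φ '' (Submodule.span ℝ ({a, u, c} : Set V) : Set V) =
    {M : Matrix (Fin 2) (Fin 2) ℝ | M.IsSymm}

/-- With `a ≠ 0` an idempotent, `u ≠ 0` with `u³ = u`, `a·u = ½u`,
`a·u² = a` and `c := u² - a`, the elements `a, u, c` are linearly independent and there is
a unique (on the span) injective `ℝ`-linear representation of the span of `{a, u, c}` onto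
the symmetric `2×2` real matrices sending `a ↦ [[1,0],[0,0]]`, `u ↦ [[0,1],[1,0]]`,
`c ↦ [[0,0],[0,1]]`. -/
theorem jordan_subalgebra_iso_sym2
    {V : Type*} [NonAssocRing V] [Module ℝ V] [SMulCommClass ℝ V V] [IsScalarTower ℝ V V]
    (comm : ∀ x y : V, x * y = y * x)
    (jordan : ∀ x y : V, (x * y) * (x * x) = x * (y * (x * x)))
    (a u : V) (ha : a * a = a) (ha0 : a ≠ 0)
    (hu0 : u ≠ 0) (hu3 : u * (u * u) = u)
    (hau : a * u = (1 / 2 : ℝ) • u)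
    (hau2 : a * (u * u) = a)
    (c : V) (hc : c = u * u - a) :
    LinearIndependent ℝ ![a, u, c] ∧
    ∃ φ : V →ₗ[ℝ] Matrix (Fin 2) (Fin 2) ℝ, IsSymRep a u c φ ∧
      ∀ ψ : V →ₗ[ℝ] Matrix (Fin 2) (Fin 2) ℝ, IsSymRep a u c ψ →
        ∀ x ∈ Submodule.span ℝ ({a, u, c} : Set V), ψ x = φ x := by
  -- product facts
  have hua : u * a = (1 / 2 : ℝ) • u := (comm u a).trans hau
  have hu2a : (u * u) * a = a := (comm _ _).trans hau2
  have hac : a * c = 0 := by rw [hc, mul_sub, hau2, ha, sub_self]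
  have hca : c * a = 0 := (comm c a).trans hac
  have huc : u * c = (1 / 2 : ℝ) • u := by
    rw [hc, mul_sub, hu3, hua]; module
  have hcu : c * u = (1 / 2 : ℝ) • u := (comm c u).trans huc
  have hu2 : u * u = a + c := by rw [hc]; abel
  have hu4 : (u * u) * (u * u) = u * u := by rw [jordan u u, hu3]
  have hcc : c * c = c := by
    rw [hc, sub_mul, mul_sub, mul_sub, hu4, hu2a, hau2, ha]
    abel
  -- coefficients are determined
  have hz : ∀ α β γ : ℝ, α • a + β • u + γ • c = 0 → α = 0 ∧ β = 0 ∧ γ = 0 := by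
    intro α β γ h
    have h1 : α • a + (β / 2) • u = 0 := by
      have := congrArg (a * ·) h
      simp only [mul_add, mul_smul_comm, ha, hau, hac, smul_zero, add_zero, smul_smul,
        mul_zero] at this
      linear_combination (norm := module) this
    have h2 : (β / 2) • u + γ • c = 0 := by
      linear_combination (norm := module) h - h1
    have h3 : (β / 4 : ℝ) • u = 0 := by
      have := congrArg (a * ·) h2
      simp only [mul_add, mul_smul_comm, hau, hac, smul_zero, add_zero, smul_smul,
        mul_zero] at this
      linear_combination (norm := module) this
    have hβ : β = 0 := by
      rcases smul_eq_zero.1 h3 with hr | hx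
      · linarith [hr]
      · exact absurd hx hu0
    have h4 : γ • c = 0 := by
      rw [hβ] at h2; simpa using h2
    have h5 : (γ / 2 : ℝ) • u = 0 := by
      have := congrArg (u * ·) h4
      simp only [mul_smul_comm, huc, smul_smul, mul_zero] at this
      linear_combination (norm := module) this
    have hγ : γ = 0 := by
      rcases smul_eq_zero.1 h5 with hr | hx
      · linarith [hr]
      · exact absurd hx hu0
    have hα : α = 0 := by
      rw [hβ, hγ] at h; simp only [zero_smul, add_zero] at h
      rcases smul_eq_zero.1 h with hr | hx
      · exact hr
      · exact absurd hx ha0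
    exact ⟨hα, hβ, hγ⟩
  have hli : LinearIndependent ℝ ![a, u, c] := by
    rw [Fintype.linearIndependent_iff]
    intro g hg
    have : g 0 • a + g 1 • u + g 2 • c = 0 := by
      simpa [Fin.sum_univ_three] using hg
    obtain ⟨h0, h1, h2⟩ := hz _ _ _ this
    intro i; fin_cases i <;> assumption
  refine ⟨hli, ?_⟩
  set p : Submodule ℝ V := Submodule.span ℝ ({a, u, c} : Set V) with hp
  have hrange : Set.range ![a, u, c] = ({a, u, c} : Set V) := by
    ext x; simp [Matrix.range_cons, Matrix.range_empty]; tauto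
  have hmem : ∀ x, x ∈ p ↔ ∃ α β γ : ℝ, x = α • a + β • u + γ • c := by
    intro x
    constructor
    · intro hx
      rw [hp, Submodule.mem_span_insert] at hx
      obtain ⟨α, z, hz1, rfl⟩ := hx
      rw [Submodule.mem_span_insert] at hz1
      obtain ⟨β, w, hw1, rfl⟩ := hz1
      rw [Submodule.mem_span_singleton] at hw1
      obtain ⟨γ, rfl⟩ := hw1
      exact ⟨α, β, γ, by abel⟩
    · rintro ⟨α, β, γ, rfl⟩
      have hha : a ∈ p := Submodule.subset_span (by simp)
      have hhu : u ∈ p := Submodule.subset_span (by simp)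
      have hhc : c ∈ p := Submodule.subset_span (by simp)
      exact add_mem (add_mem (p.smul_mem _ hha) (p.smul_mem _ hhu)) (p.smul_mem _ hhc)
  -- construct φ
  have hspan_eq : Submodule.span ℝ (Set.range ![a, u, c]) = p := by rw [hrange]
  obtain ⟨q, hq⟩ := Submodule.exists_isCompl p
  let b : Module.Basis (Fin 3) ℝ ↥p := (Module.Basis.span hli).map (LinearEquiv.ofEq _ _ hspan_eq)
  let M : Fin 3 → Matrix (Fin 2) (Fin 2) ℝ := ![!![1,0;0,0], !![0,1;1,0], !![0,0;0,1]]
  let g : ↥p →ₗ[ℝ] Matrix (Fin 2) (Fin 2) ℝ := b.constr ℝ M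
  let φ : V →ₗ[ℝ] Matrix (Fin 2) (Fin 2) ℝ := g.comp (p.projectionOnto q hq)
  have hbval : ∀ i : Fin 3, (b i : V) = ![a, u, c] i := by
    intro i
    simp [b, Module.Basis.span_apply]
  have hφval : ∀ i : Fin 3, φ (![a, u, c] i) = M i := by
    intro i
    have hmemi : ![a, u, c] i ∈ p := by
      fin_cases i <;> exact Submodule.subset_span (by simp)
    have hπ : p.projectionOnto q hq (![a, u, c] i) = b i := by
      have : (![a, u, c] i : V) = ((b i : ↥p) : V) := (hbval i).symm
      rw [this, Submodule.projectionOnto_apply_left]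
    show g (p.projectionOnto q hq (![a, u, c] i)) = M i
    rw [hπ]; exact b.constr_basis ℝ M i
  have hφa : φ a = !![1,0;0,0] := hφval 0
  have hφu : φ u = !![0,1;1,0] := hφval 1
  have hφc : φ c = !![0,0;0,1] := hφval 2
  have hcomb : ∀ α β γ : ℝ,
      α • (!![1,0;0,0] : Matrix (Fin 2) (Fin 2) ℝ) + β • !![0,1;1,0] + γ • !![0,0;0,1]
        = !![α, β; β, γ] := by
    intro α β γ
    ext i j
    fin_cases i <;> fin_cases j <;> simp
  have hφv : ∀ α β γ : ℝ, φ (α • a + β • u + γ • c) = !![α, β; β, γ] := by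
    intro α β γ
    rw [map_add, map_add, map_smul, map_smul, map_smul, hφa, hφu, hφc, hcomb]
  have hentries : ∀ α β γ α' β' γ' : ℝ,
      (!![α, β; β, γ] : Matrix (Fin 2) (Fin 2) ℝ) = !![α', β'; β', γ'] →
        α = α' ∧ β = β' ∧ γ = γ' := by
    intro α β γ α' β' γ' h
    refine ⟨?_, ?_, ?_⟩
    · have := congrFun (congrFun h 0) 0; simpa using this
    · have := congrFun (congrFun h 0) 1; simpa using this
    · have := congrFun (congrFun h 1) 1; simpa using this
  refine ⟨φ, ⟨?_, ?_, hφa, hφu, hφc, ?_⟩, ?_⟩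
  · -- injectivity
    intro x hx y hy hxy
    obtain ⟨α, β, γ, rfl⟩ := (hmem x).1 hx
    obtain ⟨α', β', γ', rfl⟩ := (hmem y).1 hy
    rw [hφv, hφv] at hxy
    obtain ⟨h1, h2, h3⟩ := hentries _ _ _ _ _ _ hxy
    rw [h1, h2, h3]
  · -- multiplicativity
    intro x hx y hy
    obtain ⟨α, β, γ, rfl⟩ := (hmem x).1 hx
    obtain ⟨α', β', γ', rfl⟩ := (hmem y).1 hy
    have hprod : (α • a + β • u + γ • c) * (α' • a + β' • u + γ' • c)
        = (α * α' + β * β') • a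
          + ((α * β' + α' * β) / 2 + (β * γ' + β' * γ) / 2) • u
          + (β * β' + γ * γ') • c := by
      simp only [add_mul, mul_add, smul_mul_assoc, mul_smul_comm, smul_smul]
      rw [ha, hau, hua, hac, hca, hu2, huc, hcu, hcc]
      module
    rw [hprod, hφv, hφv, hφv]
    ext i j
    fin_cases i <;> fin_cases j <;>
      simp [Matrix.mul_apply, Fin.sum_univ_two] <;> ring
  · -- image
    ext N
    constructor
    · rintro ⟨x, hx, rfl⟩
      obtain ⟨α, β, γ, rfl⟩ := (hmem x).1 hx
      rw [hφv]
      show (!![α, β; β, γ] : Matrix (Fin 2) (Fin 2) ℝ).IsSymm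
      unfold Matrix.IsSymm
      ext i j
      fin_cases i <;> fin_cases j <;> simp
    · intro hN
      refine ⟨N 0 0 • a + N 0 1 • u + N 1 1 • c, (hmem _).2 ⟨_, _, _, rfl⟩, ?_⟩
      rw [hφv]
      have h10 : N 0 1 = N 1 0 := by
        have := congrFun (congrFun hN 0) 1
        simpa [Matrix.transpose_apply] using this.symm
      ext i j
      fin_cases i <;> fin_cases j <;> simp [h10]
  · -- uniqueness
    intro ψ hψ x hx
    obtain ⟨_, _, ha', hu', hc', _⟩ := hψ
    obtain ⟨α, β, γ, rfl⟩ := (hmem x).1 hx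
    rw [map_add, map_add, map_smul, map_smul, map_smul, ha', hu', hc', hcomb, hφv]
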